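/- In a simple probabilistic relation under an injective scoring function, the Global-Topk probability of any tuple t is monotone nondecreasing in p(t): if p'(t) > p(t) and p' agrees with p on all other tuples, then P'_k(t) = (p'(t)/p(t)) · P_k(t), hence P'_k(t) ≥ P_k(t). -/

import Mathlib

open Finset

/-- Monotonicity of the Global-Topk probability of a tuple in its own probability:
raising `p t₀` to `p' t₀` scales its Global-Topk probability by `p' t₀ / p t₀`,
hence does not decrease it. -/
theorem globalTopk_monotone_in_prob (n : ℕ) (p p' : ℕ → ℝ) (t0 : ℕ)
    (ht0 : t0 ∈ Finset.Icc 1 n)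
    (hp : ∀ i ∈ Finset.Icc 1 n, p i ∈ Set.Ioc (0 : ℝ) 1)
    (hp' : ∀ i ∈ Finset.Icc 1 n, p' i ∈ Set.Ioc (0 : ℝ) 1)
    (hraise : p t0 < p' t0)
    (hagree : ∀ j, j ≠ t0 → p' j = p j)
    (q : (ℕ → ℝ) → ℕ → ℕ → ℝ)
    (hq : ∀ f k i, q f k i =
      ∑ W ∈ (Finset.Icc 1 n).powerset.filter
          (fun W => i ∈ W ∧ (W.filter (fun j => j < i)).card < k),
        (∏ j ∈ W, f j) * ∏ j ∈ Finset.Icc 1 n \ W, (1 - f j))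
    (k : ℕ) :
    q p' k t0 = (p' t0 / p t0) * q p k t0 ∧ q p k t0 ≤ q p' k t0 := by
  have hpos : 0 < p t0 := (hp t0 ht0).1
  have hmain : q p' k t0 = (p' t0 / p t0) * q p k t0 := by
    rw [hq, hq, Finset.mul_sum]
    refine Finset.sum_congr rfl ?_
    intro W hW
    simp only [Finset.mem_filter, Finset.mem_powerset] at hW
    obtain ⟨hWsub, ht0W, -⟩ := hW
    have hcompl : ∏ j ∈ Finset.Icc 1 n \ W, (1 - p' j)
        = ∏ j ∈ Finset.Icc 1 n \ W, (1 - p j) := by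
      refine Finset.prod_congr rfl fun j hj => ?_
      rw [hagree j (by rintro rfl; exact (Finset.mem_sdiff.mp hj).2 ht0W)]
    have herase : ∏ j ∈ W.erase t0, p' j = ∏ j ∈ W.erase t0, p j :=
      Finset.prod_congr rfl fun j hj => hagree j (Finset.ne_of_mem_erase hj)
    rw [hcompl, ← Finset.mul_prod_erase W p' ht0W, ← Finset.mul_prod_erase W p ht0W, herase]
    field_simp
  refine ⟨hmain, ?_⟩
  have hqnn : 0 ≤ q p k t0 := by
    rw [hq]
    refine Finset.sum_nonneg fun W hW => ?_
    simp only [Finset.mem_filter, Finset.mem_powerset] at hW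
    refine mul_nonneg (Finset.prod_nonneg fun j hj => (hp j (hW.1 hj)).1.le)
      (Finset.prod_nonneg fun j hj => ?_)
    have := (hp j (Finset.mem_sdiff.mp hj).1).2
    linarith
  have hone : 1 ≤ p' t0 / p t0 := (one_le_div hpos).mpr hraise.le
  rw [hmain]
  exact le_mul_of_one_le_left hqnn hone
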